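/- Feasibility characterization of a target SINR: let A be an N × N real matrix with nonnegative entries whose powers (Aᵏ)_{k∈ℕ} are summable with sum S = Σ'_{k} Aᵏ, let u ∈ ℝ^N have nonnegative entries, and set p = S·u. Then there exists q ∈ ℝ^N with q ≥ 0 entrywise, q ≥ A·q + u entrywise, and Σ_{n=1}^N q_n ≤ 1 if and only if Σ_{n=1}^N p_n ≤ 1. -/

import Mathlib

/-- Feasibility characterization of a target SINR. -/
theorem stmt_11 (N : ℕ) (A : Matrix (Fin N) (Fin N) ℝ)
    (hA : ∀ i j, 0 ≤ A i j)
    (hsum : Summable (fun k : ℕ => A ^ k))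
    (u : Fin N → ℝ) (hu : ∀ n, 0 ≤ u n)
    (p : Fin N → ℝ) (hp : p = (∑' k : ℕ, A ^ k).mulVec u) :
    (∃ q : Fin N → ℝ, (∀ n, 0 ≤ q n) ∧ (∀ n, A.mulVec q n + u n ≤ q n) ∧
      (∑ n, q n) ≤ 1) ↔ (∑ n, p n) ≤ 1 := by
  set S : Matrix (Fin N) (Fin N) ℝ := ∑' k : ℕ, A ^ k with hS
  -- powers are entrywise nonnegative
  have hpow : ∀ (k : ℕ) (i j), 0 ≤ (A ^ k) i j := by
    intro k
    induction k with
    | zero => intro i j; by_cases h : i = j <;>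
        simp [pow_zero, Matrix.one_apply, h]
    | succ k ih =>
        intro i j
        rw [pow_succ, Matrix.mul_apply]
        exact Finset.sum_nonneg fun l _ => mul_nonneg (ih i l) (hA l j)
  -- entrywise summability
  have hsum' : ∀ i j, Summable (fun k : ℕ => (A ^ k) i j) := by
    intro i j
    have hc : Continuous (fun M : Matrix (Fin N) (Fin N) ℝ => M i j) :=
      (continuous_apply j).comp (continuous_apply i)
    let φ : Matrix (Fin N) (Fin N) ℝ →+ ℝ :=
      { toFun := fun M => M i j, map_zero' := rfl, map_add' := fun _ _ => rfl }
    exact hsum.map φ hc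
  have hSapp : ∀ i j, S i j = ∑' k : ℕ, (A ^ k) i j := by
    intro i j
    rw [hS]
    let φ : Matrix (Fin N) (Fin N) ℝ →+ ℝ :=
      { toFun := fun M => M i j, map_zero' := rfl, map_add' := fun _ _ => rfl }
    have hc : Continuous (fun M : Matrix (Fin N) (Fin N) ℝ => M i j) :=
      (continuous_apply j).comp (continuous_apply i)
    exact ((hsum.hasSum.map φ hc).tsum_eq).symm
  have hSnn : ∀ i j, 0 ≤ S i j := by
    intro i j
    rw [hSapp]
    exact tsum_nonneg fun k => hpow k i j
  -- p is nonnegative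
  have hpnn : ∀ n, 0 ≤ p n := by
    intro n
    rw [hp]
    simp only [Matrix.mulVec, dotProduct]
    exact Finset.sum_nonneg fun j _ => mul_nonneg (hSnn n j) (hu j)
  -- A * S = S - 1
  have hAS : A * S = S - 1 := by
    have h1 : A * S = ∑' k : ℕ, A * A ^ k := (hsum.tsum_mul_left A).symm
    have h2 : (fun k : ℕ => A * A ^ k) = fun k : ℕ => A ^ (k + 1) := by
      funext k; rw [pow_succ']
    have h3 : S = A ^ 0 + ∑' k : ℕ, A ^ (k + 1) := Summable.tsum_eq_zero_add hsum
    rw [pow_zero] at h3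
    rw [h1, h2, h3]
    abel
  -- p is a fixed point
  have hpfix : ∀ n, A.mulVec p n + u n = p n := by
    have : A.mulVec p = p - u := by
      rw [hp, Matrix.mulVec_mulVec, hAS, Matrix.sub_mulVec, Matrix.one_mulVec]
    intro n
    rw [this]
    simp
  -- monotonicity of mulVec
  have hmono : ∀ (x y : Fin N → ℝ), (∀ n, x n ≤ y n) → ∀ n,
      A.mulVec x n ≤ A.mulVec y n := by
    intro x y hxy n
    simp only [Matrix.mulVec, dotProduct]
    exact Finset.sum_le_sum fun j _ => mul_le_mul_of_nonneg_left (hxy j) (hA n j)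
  constructor
  · rintro ⟨q, hq0, hqc, hq1⟩
    -- show p ≤ q entrywise
    have key : ∀ (k : ℕ) (n : Fin N),
        (A ^ k).mulVec q n + (∑ j ∈ Finset.range k, A ^ j).mulVec u n ≤ q n := by
      intro k
      induction k with
      | zero => intro n; simp [Matrix.one_mulVec]
      | succ k ih =>
          intro n
          have e1 : (A ^ (k + 1)).mulVec q = A.mulVec ((A ^ k).mulVec q) := by
            rw [pow_succ', ← Matrix.mulVec_mulVec]
          have e2 : (∑ j ∈ Finset.range (k + 1), A ^ j).mulVec u
              = A.mulVec ((∑ j ∈ Finset.range k, A ^ j).mulVec u) + u := by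
            rw [Finset.sum_range_succ']
            have : ∑ i ∈ Finset.range k, A ^ (i + 1)
                = A * ∑ j ∈ Finset.range k, A ^ j := by
              rw [Finset.mul_sum]
              exact Finset.sum_congr rfl fun i _ => by rw [pow_succ']
            rw [this, pow_zero, Matrix.add_mulVec, Matrix.one_mulVec,
              Matrix.mulVec_mulVec]
          rw [e1, e2]
          have h4 : A.mulVec ((A ^ k).mulVec q) n
              + (A.mulVec ((∑ j ∈ Finset.range k, A ^ j).mulVec u) n + u n)
              = A.mulVec ((A ^ k).mulVec q + (∑ j ∈ Finset.range k, A ^ j).mulVec u) n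
                + u n := by
            rw [Matrix.mulVec_add]; simp [Pi.add_apply]; ring
          show A.mulVec ((A ^ k).mulVec q) n
              + (A.mulVec ((∑ j ∈ Finset.range k, A ^ j).mulVec u) n + u n) ≤ q n
          rw [h4]
          calc A.mulVec ((A ^ k).mulVec q + (∑ j ∈ Finset.range k, A ^ j).mulVec u) n
                + u n
              ≤ A.mulVec q n + u n := by
                have := hmono ((A ^ k).mulVec q
                  + (∑ j ∈ Finset.range k, A ^ j).mulVec u) q (fun m => ih m) n
                linarith
            _ ≤ q n := hqc n
    have hle : ∀ n, p n ≤ q n := by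
      intro n
      -- limits
      have h1 : Filter.Tendsto (fun k : ℕ => (A ^ k).mulVec q n)
          Filter.atTop (nhds 0) := by
        have : ∀ j, Filter.Tendsto (fun k : ℕ => (A ^ k) n j * q j)
            Filter.atTop (nhds 0) := by
          intro j
          simpa using ((hsum' n j).tendsto_atTop_zero).mul_const (q j)
        have := tendsto_finset_sum Finset.univ (fun j _ => this j)
        simpa [Matrix.mulVec, dotProduct] using this
      have h2 : Filter.Tendsto
          (fun k : ℕ => (∑ j ∈ Finset.range k, A ^ j).mulVec u n)
          Filter.atTop (nhds (p n)) := by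
        have hm : ∀ m, Filter.Tendsto
            (fun k : ℕ => (∑ j ∈ Finset.range k, (A ^ j) n m) * u m)
            Filter.atTop (nhds (S n m * u m)) := by
          intro m
          have := ((hsum' n m).hasSum).tendsto_sum_nat
          rw [← hSapp n m] at this
          exact this.mul_const (u m)
        have := tendsto_finset_sum Finset.univ (fun m _ => hm m)
        have heq : ∀ k : ℕ, (∑ j ∈ Finset.range k, A ^ j).mulVec u n
            = ∑ m, (∑ j ∈ Finset.range k, (A ^ j) n m) * u m := by
          intro k
          simp [Matrix.mulVec, dotProduct, Matrix.sum_apply]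
        have hpn : p n = ∑ m, S n m * u m := by
          rw [hp]; rfl
        rw [← hpn] at this
        simpa [heq] using this
      have := h1.add h2
      rw [zero_add] at this
      exact le_of_tendsto this (Filter.Eventually.of_forall fun k => key k n)
    calc ∑ n, p n ≤ ∑ n, q n := Finset.sum_le_sum fun n _ => hle n
      _ ≤ 1 := hq1
  · intro hps
    exact ⟨p, hpnn, fun n => (hpfix n).le, hps⟩
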